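/- Let C be a symmetric monoidal category, CCom its category of cocommutative comonoids (which is cartesian, with the forgetful functor U : CCom → C strict monoidal). Then monoidal lenses mLens((A,B),(S,T)) := CCom(S,A) × C(U S ⊗ B, T) are mixed optics: there is an isomorphism ∫^{C∈CCom} CCom(S, C×A) × C(U C ⊗ B, T) ≅ CCom(S,A) × C(U S ⊗ B, T), exhibiting mLens as the optic for the actions of the cartesian product on CCom and of C ⊘ B := U C ⊗ B on C. -/

import Mathlib

/-!
STATEMENT 1: Monoidal lenses (lenses in a symmetric monoidal category, after Myers) are
mixed optics, for the actions of the cartesian product on the category `CCom` of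
cocommutative comonoids and of `C ⊘ B := U C ⊗ B` on `C`.

We work over the cosmos `Sets = Type`, coends of `Type`-valued functors being computed as
quotients of sigma types by the dinaturality relation.
-/

open CategoryTheory MonoidalCategory Limits

universe v₁ v₂ v₃ u₁ u₂ u₃

section Optic

variable {M : Type u₁} [Category.{v₁} M] {C : Type u₂} [Category.{v₂} C]
  {D : Type u₃} [Category.{v₃} D]

/-- A representative `(m, l, r)` of the coend
`∫^{m ∈ M} C(S, m ⊘ A) ⊗ D(m ⊛ B, T)` defining a mixed optic, for the
actions `L = (⊘) : M ⥤ [C,C]` and `R = (⊛) : M ⥤ [D,D]`. -/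
structure OpticRep (L : M ⥤ C ⥤ C) (R : M ⥤ D ⥤ D) (A S : C) (B T : D) where
  res : M
  view : S ⟶ (L.obj res).obj A
  update : (R.obj res).obj B ⟶ T

/-- The dinaturality relation identifying representatives of the coend. -/
inductive OpticRel (L : M ⥤ C ⥤ C) (R : M ⥤ D ⥤ D) (A S : C) (B T : D) :
    OpticRep L R A S B T → OpticRep L R A S B T → Prop
  | rel {m m' : M} (f : m ⟶ m') (l : S ⟶ (L.obj m).obj A) (r : (R.obj m').obj B ⟶ T) :
      OpticRel L R A S B T
        ⟨m, l, (R.map f).app B ≫ r⟩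
        ⟨m', l ≫ (L.map f).app A, r⟩

/-- The set (coend) `∫^{m ∈ M} C(S, m ⊘ A) × D(m ⊛ B, T)` of mixed optics from `(S,T)`
with focus `(A,B)`. -/
def Optic (L : M ⥤ C ⥤ C) (R : M ⥤ D ⥤ D) (A S : C) (B T : D) :=
  Quot (OpticRel L R A S B T)

end Optic

variable (C : Type u₂) [Category.{v₂} C] [MonoidalCategory C] [SymmetricCategory C]

/-- The category of cocommutative comonoids in a symmetric monoidal category `C`:
the full subcategory of the category `Comon_ C` of comonoids consisting of those comonoids
whose comultiplication is cocommutative. -/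
def CCom : Type max u₂ v₂ :=
  ObjectProperty.FullSubcategory fun X : Comon C =>
    ComonObj.comul (X := X.X) ≫ (β_ X.X X.X).hom = ComonObj.comul (X := X.X)

instance : Category (CCom C) := ObjectProperty.FullSubcategory.category _

/-- The forgetful functor `U : CCom → C` from cocommutative comonoids to `C`. -/
def CComForget : CCom C ⥤ C :=
  ObjectProperty.ι _ ⋙ Comon.forget C

/-- **Monoidal lenses are mixed optics.**  Let `C` be a symmetric monoidal category and
`CCom` its category of cocommutative comonoids, which is cartesian (Fox's theorem) with the
forgetful functor `U : CCom → C` strict monoidal.  For `S, A ∈ CCom` and `B, T ∈ C` there is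
an isomorphism
`∫^{C ∈ CCom} CCom(S, C × A) × C(U C ⊗ B, T) ≅ CCom(S, A) × C(U S ⊗ B, T)`,
exhibiting `mLens((A,B),(S,T)) := CCom(S,A) × C(U S ⊗ B, T)` as the mixed optic for the
actions of the cartesian product on `CCom` and of `C ⊘ B := U C ⊗ B` on `C`. -/
theorem monoidal_lenses_are_mixed_optics
    [HasTerminal (CCom C)] [HasBinaryProducts (CCom C)]
    (S A : CCom C) (B T : C) :
    Nonempty (Optic (prod.functor : CCom C ⥤ CCom C ⥤ CCom C)
        (CComForget C ⋙ curriedTensor C) A S B T ≃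
      ((S ⟶ A) × ((CComForget C).obj S ⊗ B ⟶ T))) := by
  classical
  refine ⟨{
    toFun := Quot.lift
      (fun p => (p.view ≫ prod.snd,
        (CComForget C).map (p.view ≫ prod.fst) ▷ B ≫ p.update)) ?_
    invFun := fun q => Quot.mk _ ⟨S, prod.lift (𝟙 S) q.1, q.2⟩
    left_inv := ?_
    right_inv := ?_ }⟩
  · rintro _ _ ⟨f, l, r⟩
    simp only [Prod.mk.injEq]
    constructor
    · erw [Category.assoc, prod.map_snd, Category.comp_id]
    · erw [Category.assoc, prod.map_fst, Functor.map_comp, comp_whiskerRight, Category.assoc]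
      erw [Functor.map_comp, Functor.map_comp, comp_whiskerRight, comp_whiskerRight, Category.assoc]
      simp only [Category.assoc]
      rfl
  · intro p
    induction p using Quot.ind with
    | _ p =>
      obtain ⟨m, l, r⟩ := p
      dsimp
      have e1 : (CComForget C).map (l ≫ prod.fst) ▷ B
          = ((CComForget C ⋙ curriedTensor C).map (l ≫ prod.fst)).app B := by simp
      have e2 : prod.lift (𝟙 S) (l ≫ prod.snd)
          ≫ ((prod.functor : CCom C ⥤ CCom C ⥤ CCom C).map (l ≫ prod.fst)).app A = l := by
        dsimp [prod.functor]
        ext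
        · erw [Category.assoc, prod.map_fst, prod.lift_fst_assoc, Category.id_comp]
        · erw [Category.assoc, prod.map_snd, Category.comp_id, prod.lift_snd]
      rw [e1]
      refine (Quot.sound (OpticRel.rel
        (L := (prod.functor : CCom C ⥤ CCom C ⥤ CCom C))
        (R := CComForget C ⋙ curriedTensor C) (l ≫ prod.fst)
        (prod.lift (𝟙 S) (l ≫ prod.snd)) r)).trans ?_
      exact congrArg (fun v => Quot.mk (OpticRel (prod.functor : CCom C ⥤ CCom C ⥤ CCom C) (CComForget C ⋙ curriedTensor C) A S B T) (OpticRep.mk m v r)) e2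
  · rintro ⟨f, g⟩
    dsimp
    simp
    exact ⟨prod.lift_snd _ _, by erw [prod.lift_fst]; simp⟩
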